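/- Let a and b be real numbers and define on (0,1) the function τ(t) = t^{2a²}·(1−t)^{−a²−b²+1/16}·((1+√(1−t))/2)^{−4a²+(2b−1/2)²} (real powers of positive real bases). Then σ(t) = t(t−1)·τ'(t)/τ(t) satisfies the σ-form of Painlevé VI with parameters (θ_0,θ_t,θ_1,θ_∞) = (a, a, b, 1/2−b) at every t ∈ (0,1). -/

import Mathlib

open Set

/-- Derivative of the explicit tau function. -/
lemma pvi_hasDerivAt_g (A B C : ℝ) {x : ℝ} (hx : x ∈ Ioo (0 : ℝ) 1) :
    HasDerivAt (fun y : ℝ => y ^ A * (1 - y) ^ B * ((1 + Real.sqrt (1 - y)) / 2) ^ C)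
      (x ^ A * (1 - x) ^ B * ((1 + Real.sqrt (1 - x)) / 2) ^ C *
        (A / x - B / (1 - x) -
          C / (4 * Real.sqrt (1 - x) * ((1 + Real.sqrt (1 - x)) / 2)))) x := by
  obtain ⟨hx0, hx1⟩ := hx
  have h1t : (0 : ℝ) < 1 - x := by linarith
  have hs0 : (0 : ℝ) < Real.sqrt (1 - x) := Real.sqrt_pos.2 h1t
  have hu0 : (0 : ℝ) < (1 + Real.sqrt (1 - x)) / 2 := by positivity
  have h1 : HasDerivAt (fun y : ℝ => 1 - y) (-1) x := (hasDerivAt_id x).const_sub 1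
  have hsq : HasDerivAt (fun y : ℝ => Real.sqrt (1 - y)) (-1 / (2 * Real.sqrt (1 - x))) x :=
    h1.sqrt h1t.ne'
  have hu : HasDerivAt (fun y : ℝ => (1 + Real.sqrt (1 - y)) / 2)
      ((-1 / (2 * Real.sqrt (1 - x)) ) / 2) x := (hsq.const_add 1).div_const 2
  have hp1 : HasDerivAt (fun y : ℝ => y ^ A) (A * x ^ (A - 1)) x :=
    Real.hasDerivAt_rpow_const (Or.inl hx0.ne')
  have hp2 : HasDerivAt (fun y : ℝ => (1 - y) ^ B) (-1 * B * (1 - x) ^ (B - 1)) x :=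
    h1.rpow_const (Or.inl h1t.ne')
  have hp3 : HasDerivAt (fun y : ℝ => ((1 + Real.sqrt (1 - y)) / 2) ^ C)
      ((-1 / (2 * Real.sqrt (1 - x)) / 2) * C * ((1 + Real.sqrt (1 - x)) / 2) ^ (C - 1)) x :=
    hu.rpow_const (Or.inl hu0.ne')
  have hg := (hp1.mul hp2).mul hp3
  refine hg.congr_deriv ?_
  simp only [Pi.mul_apply]
  rw [Real.rpow_sub_one hx0.ne', Real.rpow_sub_one h1t.ne', Real.rpow_sub_one hu0.ne']
  field_simp
  ring

/-- Closed form of the logarithmic-derivative combination `σ`. -/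
lemma pvi_sigma_closed (A B C : ℝ) (τ : ℝ → ℝ)
    (hτ : ∀ y ∈ Ioo (0 : ℝ) 1,
      τ y = y ^ A * (1 - y) ^ B * ((1 + Real.sqrt (1 - y)) / 2) ^ C)
    {x : ℝ} (hx : x ∈ Ioo (0 : ℝ) 1) :
    x * (x - 1) * deriv τ x / τ x =
      B + (-A - B - C / 2) * (1 - x) + (C / 2) * Real.sqrt (1 - x) := by
  obtain ⟨hx0, hx1⟩ := hx
  have h1t : (0 : ℝ) < 1 - x := by linarith
  have hs0 : (0 : ℝ) < Real.sqrt (1 - x) := Real.sqrt_pos.2 h1t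
  have hu0 : (0 : ℝ) < (1 + Real.sqrt (1 - x)) / 2 := by positivity
  have hg0 : (0 : ℝ) < x ^ A * (1 - x) ^ B * ((1 + Real.sqrt (1 - x)) / 2) ^ C := by
    have := Real.rpow_pos_of_pos hx0 A
    have := Real.rpow_pos_of_pos h1t B
    have := Real.rpow_pos_of_pos hu0 C
    positivity
  have hev : τ =ᶠ[nhds x]
      fun y : ℝ => y ^ A * (1 - y) ^ B * ((1 + Real.sqrt (1 - y)) / 2) ^ C := by
    filter_upwards [Ioo_mem_nhds hx0 hx1] with y hy using hτ y hy
  have hdτ : deriv τ x =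
      x ^ A * (1 - x) ^ B * ((1 + Real.sqrt (1 - x)) / 2) ^ C *
        (A / x - B / (1 - x) -
          C / (4 * Real.sqrt (1 - x) * ((1 + Real.sqrt (1 - x)) / 2))) :=
    hev.deriv_eq.trans (pvi_hasDerivAt_g A B C ⟨hx0, hx1⟩).deriv
  rw [hdτ, hτ x ⟨hx0, hx1⟩]
  set s := Real.sqrt (1 - x) with hsdef
  set G := x ^ A * (1 - x) ^ B * ((1 + s) / 2) ^ C with hGdef
  have hs2 : s ^ 2 = 1 - x := Real.sq_sqrt h1t.le
  have hx' : x = 1 - s ^ 2 := by linarith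
  have hG0 : G ≠ 0 := hg0.ne'
  rw [hx']
  have h2 : (1 : ℝ) - (1 - s ^ 2) = s ^ 2 := by ring
  rw [h2]
  have hs1 : (1 : ℝ) + s ≠ 0 := by positivity
  have hss : s ^ 2 ≠ 0 := by positivity
  have hxs : (1 : ℝ) - s ^ 2 ≠ 0 := by rw [← hx']; exact hx0.ne'
  field_simp
  ring

/-- Derivative of the closed form of `σ`. -/
lemma pvi_hasDerivAt_F (A B C : ℝ) {x : ℝ} (hx : x ∈ Ioo (0 : ℝ) 1) :
    HasDerivAt (fun y : ℝ => B + (-A - B - C / 2) * (1 - y) + (C / 2) * Real.sqrt (1 - y))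
      ((A + B + C / 2) - C / (4 * Real.sqrt (1 - x))) x := by
  obtain ⟨hx0, hx1⟩ := hx
  have h1t : (0 : ℝ) < 1 - x := by linarith
  have hs0 : (0 : ℝ) < Real.sqrt (1 - x) := Real.sqrt_pos.2 h1t
  have h1 : HasDerivAt (fun y : ℝ => 1 - y) (-1) x := (hasDerivAt_id x).const_sub 1
  have hsq : HasDerivAt (fun y : ℝ => Real.sqrt (1 - y)) (-1 / (2 * Real.sqrt (1 - x))) x :=
    h1.sqrt h1t.ne'
  have hF := ((h1.const_mul (-A - B - C / 2)).const_add B).add (hsq.const_mul (C / 2))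
  refine hF.congr_deriv ?_
  field_simp
  ring

/-- Second derivative: derivative of `F1`. -/
lemma pvi_hasDerivAt_F1 (A B C : ℝ) {x : ℝ} (hx : x ∈ Ioo (0 : ℝ) 1) :
    HasDerivAt (fun y : ℝ => (A + B + C / 2) - C / (4 * Real.sqrt (1 - y)))
      (-C / (8 * Real.sqrt (1 - x) ^ 3)) x := by
  obtain ⟨hx0, hx1⟩ := hx
  have h1t : (0 : ℝ) < 1 - x := by linarith
  have hs0 : (0 : ℝ) < Real.sqrt (1 - x) := Real.sqrt_pos.2 h1t
  have h1 : HasDerivAt (fun y : ℝ => 1 - y) (-1) x := (hasDerivAt_id x).const_sub 1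
  have hsq : HasDerivAt (fun y : ℝ => Real.sqrt (1 - y)) (-1 / (2 * Real.sqrt (1 - x))) x :=
    h1.sqrt h1t.ne'
  have hden : HasDerivAt (fun y : ℝ => 4 * Real.sqrt (1 - y))
      (4 * (-1 / (2 * Real.sqrt (1 - x)))) x := hsq.const_mul 4
  have hdiv := (hasDerivAt_const x C).div hden (by positivity)
  have hF1 := hdiv.const_sub (A + B + C / 2)
  refine hF1.congr_deriv ?_
  field_simp
  ring

/-- the tau function of the algebraic Painlevé VI solution II,
`τ(t) = t^{2a²}(1−t)^{−a²−b²+1/16}((1+√(1−t))/2)^{−4a²+(2b−1/2)²}`, has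
`σ(t) = t(t−1)τ'(t)/τ(t)` satisfying the σ-form of Painlevé VI with parameters
`(θ_0,θ_t,θ_1,θ_∞) = (a, a, b, 1/2−b)` on `(0,1)`. -/
theorem algebraic_solution_II_sigma_form (a b : ℝ) (τ : ℝ → ℝ)
    (hτ : ∀ t ∈ Ioo (0 : ℝ) 1,
      τ t = t ^ (2 * a ^ 2) * (1 - t) ^ (-a ^ 2 - b ^ 2 + 1 / 16) *
        ((1 + Real.sqrt (1 - t)) / 2) ^ (-4 * a ^ 2 + (2 * b - 1 / 2) ^ 2))
    (σ : ℝ → ℝ)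
    (hσ : ∀ t : ℝ, σ t = t * (t - 1) * deriv τ t / τ t) :
    ∀ t ∈ Ioo (0 : ℝ) 1,
      (t * (t - 1) * deriv (deriv σ) t) ^ 2 =
        -2 * Matrix.det
          !![2 * a ^ 2, t * deriv σ t - σ t,
              deriv σ t + a ^ 2 + a ^ 2 + b ^ 2 - (1 / 2 - b) ^ 2;
            t * deriv σ t - σ t, 2 * a ^ 2, (t - 1) * deriv σ t - σ t;
            deriv σ t + a ^ 2 + a ^ 2 + b ^ 2 - (1 / 2 - b) ^ 2,
              (t - 1) * deriv σ t - σ t, 2 * b ^ 2] := by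
  intro t ht
  obtain ⟨ht0, ht1⟩ := ht
  have h1t : (0 : ℝ) < 1 - t := by linarith
  set A : ℝ := 2 * a ^ 2 with hA
  set B : ℝ := -a ^ 2 - b ^ 2 + 1 / 16 with hB
  set C : ℝ := -4 * a ^ 2 + (2 * b - 1 / 2) ^ 2 with hC
  have hσval : ∀ x ∈ Ioo (0 : ℝ) 1,
      σ x = B + (-A - B - C / 2) * (1 - x) + (C / 2) * Real.sqrt (1 - x) := fun x hx =>
    (hσ x).trans (pvi_sigma_closed A B C τ hτ hx)
  have hσ' : ∀ x ∈ Ioo (0 : ℝ) 1,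
      deriv σ x = (A + B + C / 2) - C / (4 * Real.sqrt (1 - x)) := by
    intro x hx
    have hev : σ =ᶠ[nhds x]
        fun y : ℝ => B + (-A - B - C / 2) * (1 - y) + (C / 2) * Real.sqrt (1 - y) := by
      filter_upwards [Ioo_mem_nhds hx.1 hx.2] with y hy using hσval y hy
    exact hev.deriv_eq.trans (pvi_hasDerivAt_F A B C hx).deriv
  have hσ'' : deriv (deriv σ) t = -C / (8 * Real.sqrt (1 - t) ^ 3) := by
    have hev : deriv σ =ᶠ[nhds t]
        fun y : ℝ => (A + B + C / 2) - C / (4 * Real.sqrt (1 - y)) := by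
      filter_upwards [Ioo_mem_nhds ht0 ht1] with y hy using hσ' y ⟨hy.1, hy.2⟩
    exact hev.deriv_eq.trans (pvi_hasDerivAt_F1 A B C ⟨ht0, ht1⟩).deriv
  rw [hσ'', hσ' t ⟨ht0, ht1⟩, hσval t ⟨ht0, ht1⟩, Matrix.det_fin_three]
  simp only [Matrix.cons_val', Matrix.cons_val_zero, Matrix.empty_val',
    Matrix.cons_val_fin_one, Matrix.cons_val_one, Matrix.head_cons, Matrix.head_fin_const,
    Matrix.cons_val_two, Matrix.tail_cons, Matrix.of_apply, Matrix.cons_val_zero]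
  set s := Real.sqrt (1 - t) with hsdef
  have hs0 : (0 : ℝ) < s := Real.sqrt_pos.2 h1t
  have hs2 : s ^ 2 = 1 - t := Real.sq_sqrt h1t.le
  have ht' : t = 1 - s ^ 2 := by linarith
  rw [ht']
  have h2 : (1 : ℝ) - (1 - s ^ 2) = s ^ 2 := by ring
  rw [h2, hA, hB, hC]
  have hsne : s ≠ 0 := hs0.ne'
  field_simp
  ring
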